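/- Let A be a CM-order and a ∈ A. Then a is a root of unity in A if and only if a·ā = 1, where ā denotes the CM involution applied to a. -/

import Mathlib

open TensorProduct

set_option synthInstance.maxHeartbeats 1000000
set_option maxHeartbeats 1000000

section Aux

variable (A : Type*) [CommRing A] [IsReduced A] [Module.Free ℤ A] [Module.Finite ℤ A]

omit [IsReduced A] [Module.Finite ℤ A] in
lemma cm_aux_inj :
    Function.Injective (Algebra.TensorProduct.includeRight : A →ₐ[ℤ] ℚ ⊗[ℤ] A) := by
  have hinj : Function.Injective ((Int.castRingHom ℚ).toIntAlgHom.toLinearMap : ℤ →ₗ[ℤ] ℚ) := by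
    intro x y h; simpa using h
  have h2 := Module.Flat.rTensor_preserves_injective_linearMap (M := A)
    ((Int.castRingHom ℚ).toIntAlgHom.toLinearMap) hinj
  intro x y h
  have hx : ∀ z : A, (LinearMap.rTensor A ((Int.castRingHom ℚ).toIntAlgHom.toLinearMap))
      ((TensorProduct.lid ℤ A).symm z) = (1 : ℚ) ⊗ₜ z := by
    intro z; simp [TensorProduct.lid_symm_apply]
  have := h2 (a₁ := (TensorProduct.lid ℤ A).symm x) (a₂ := (TensorProduct.lid ℤ A).symm y)
    (by rw [hx, hx]; exact h)
  exact (TensorProduct.lid ℤ A).symm.injective this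

instance : IsArtinianRing (ℚ ⊗[ℤ] A) := IsArtinianRing.of_finite ℚ (ℚ ⊗[ℤ] A)

/-- If the image of `x` in `ℚ ⊗ A` lies in every maximal ideal, then `x = 0`. -/
lemma cm_aux_vanish (x : A)
    (h : ∀ M : Ideal (ℚ ⊗[ℤ] A), M.IsMaximal →
      (Algebra.TensorProduct.includeRight x : ℚ ⊗[ℤ] A) ∈ M) : x = 0 := by
  have hjac : (Algebra.TensorProduct.includeRight x : ℚ ⊗[ℤ] A) ∈ Ideal.jacobson ⊥ := by
    rw [Ideal.jacobson]
    exact Ideal.mem_sInf.2 fun {J} hJ => h J hJ.2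
  obtain ⟨k, hk⟩ := IsArtinianRing.isNilpotent_jacobson_bot (R := ℚ ⊗[ℤ] A)
  have hpow : (Algebra.TensorProduct.includeRight x : ℚ ⊗[ℤ] A) ^ k = 0 := by
    have := Ideal.pow_mem_pow hjac k
    rw [hk] at this
    simpa using this
  have h0 : (Algebra.TensorProduct.includeRight (x ^ k) : ℚ ⊗[ℤ] A) = 0 := by
    rw [map_pow]; exact hpow
  have hxk : x ^ k = 0 := cm_aux_inj A (by simpa using h0)
  exact IsReduced.eq_zero x ⟨k, hxk⟩

omit [IsReduced A] [Module.Free ℤ A] in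
/-- For every maximal ideal `M` of `ℚ ⊗ A` and every `x : A` whose image under every
ring hom `A →+* ℂ` has norm `1`, some power of the image of `x` is `1` mod `M`. -/
lemma cm_aux_root (a : A) (habs : ∀ ψ : A →+* ℂ, ‖ψ a‖ = 1)
    (M : Ideal (ℚ ⊗[ℤ] A)) (hM : M.IsMaximal) :
    ∃ n : ℕ, 0 < n ∧
      (Algebra.TensorProduct.includeRight a : ℚ ⊗[ℤ] A) ^ n - 1 ∈ M := by
  letI := hM
  letI : Field (ℚ ⊗[ℤ] A ⧸ M) := Ideal.Quotient.field M
  have hfin0 : @FiniteDimensional ℚ (ℚ ⊗[ℤ] A ⧸ M) _ Ring.toAddCommGroup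
      (@Algebra.toModule _ _ _ _ (Ideal.Quotient.algebra ℚ)) := by
    exact Module.Finite.of_surjective (Ideal.Quotient.mkₐ ℚ M).toLinearMap
      Ideal.Quotient.mk_surjective
  letI : CharZero (ℚ ⊗[ℤ] A ⧸ M) :=
    @charZero_of_injective_algebraMap ℚ (ℚ ⊗[ℤ] A ⧸ M) _ _ (Ideal.Quotient.algebra ℚ)
      (by letI := (Ideal.Quotient.algebra ℚ : Algebra ℚ (ℚ ⊗[ℤ] A ⧸ M))
          exact (algebraMap ℚ (ℚ ⊗[ℤ] A ⧸ M)).injective) _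
  have heq : (Ideal.Quotient.algebra ℚ : Algebra ℚ (ℚ ⊗[ℤ] A ⧸ M)) = DivisionRing.toRatAlgebra :=
    Subsingleton.elim _ _
  rw [heq] at hfin0
  letI : NumberField (ℚ ⊗[ℤ] A ⧸ M) :=
    { to_charZero := ‹_›, to_finiteDimensional := hfin0 }
  set q : A →+* (ℚ ⊗[ℤ] A ⧸ M) :=
    (Ideal.Quotient.mk M).comp
      (Algebra.TensorProduct.includeRight : A →ₐ[ℤ] ℚ ⊗[ℤ] A).toRingHom with hq
  have hint : IsIntegral ℤ (q a) := by
    have ha : IsIntegral ℤ a := Algebra.IsIntegral.isIntegral (R := ℤ) a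
    exact ha.map q.toIntAlgHom
  have hφ : ∀ φ : (ℚ ⊗[ℤ] A ⧸ M) →+* ℂ, ‖φ (q a)‖ = 1 := fun φ => habs (φ.comp q)
  obtain ⟨n, hn, hpow⟩ :=
    NumberField.Embeddings.pow_eq_one_of_norm_eq_one (ℚ ⊗[ℤ] A ⧸ M) ℂ hint hφ
  refine ⟨n, hn, ?_⟩
  rw [← Ideal.Quotient.eq_zero_iff_mem]
  rw [map_sub, map_pow, map_one]
  rw [sub_eq_zero]
  exact hpow

end Aux

/-- In a CM-order `A` with involution `σ`, an element `a` is a root of unity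
iff `a · σ a = 1`. -/
theorem stmt6 (A : Type*) [CommRing A] [IsReduced A]
    [Module.Free ℤ A] [Module.Finite ℤ A]
    (σ : A ≃+* A)
    (hσ : ∀ (ψ : A →+* ℂ) (x : A), ψ (σ x) = starRingEnd ℂ (ψ x))
    (a : A) :
    (∃ m : ℕ, 0 < m ∧ a ^ m = 1) ↔ a * σ a = 1 := by
  classical
  constructor
  · rintro ⟨m, hm, ham⟩
    refine sub_eq_zero.mp (cm_aux_vanish A (a * σ a - 1) ?_)
    intro M hM
    letI := hM
    letI : Field (ℚ ⊗[ℤ] A ⧸ M) := Ideal.Quotient.field M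
    set q : A →+* (ℚ ⊗[ℤ] A ⧸ M) :=
      (Ideal.Quotient.mk M).comp
        (Algebra.TensorProduct.includeRight : A →ₐ[ℤ] ℚ ⊗[ℤ] A).toRingHom with hq
    letI : Nontrivial (ℚ ⊗[ℤ] A ⧸ M) := inferInstance
    obtain ⟨φ⟩ : Nonempty ((ℚ ⊗[ℤ] A ⧸ M) →+* ℂ) := by
      -- need an embedding into ℂ; build NumberField instance
      have hfin0 : @FiniteDimensional ℚ (ℚ ⊗[ℤ] A ⧸ M) _ Ring.toAddCommGroup
          (@Algebra.toModule _ _ _ _ (Ideal.Quotient.algebra ℚ)) := by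
        exact Module.Finite.of_surjective (Ideal.Quotient.mkₐ ℚ M).toLinearMap
          Ideal.Quotient.mk_surjective
      letI : CharZero (ℚ ⊗[ℤ] A ⧸ M) :=
        @charZero_of_injective_algebraMap ℚ (ℚ ⊗[ℤ] A ⧸ M) _ _ (Ideal.Quotient.algebra ℚ)
          (by letI := (Ideal.Quotient.algebra ℚ : Algebra ℚ (ℚ ⊗[ℤ] A ⧸ M))
              exact (algebraMap ℚ (ℚ ⊗[ℤ] A ⧸ M)).injective) _
      have heq : (Ideal.Quotient.algebra ℚ : Algebra ℚ (ℚ ⊗[ℤ] A ⧸ M)) =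
          DivisionRing.toRatAlgebra := Subsingleton.elim _ _
      rw [heq] at hfin0
      letI : NumberField (ℚ ⊗[ℤ] A ⧸ M) :=
        { to_charZero := ‹_›, to_finiteDimensional := hfin0 }
      infer_instance
    set ψ : A →+* ℂ := φ.comp q with hψ
    have h1 : ψ a ^ m = 1 := by rw [← map_pow, ham, map_one]
    have hnorm1 : ‖ψ a‖ = 1 := Complex.norm_eq_one_of_pow_eq_one h1 hm.ne'
    have key : ψ (a * σ a - 1) = 0 := by
      rw [map_sub, map_mul, map_one, hσ ψ a, Complex.mul_conj]
      have : Complex.normSq (ψ a) = 1 := by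
        rw [← Complex.sq_norm, hnorm1, one_pow]
      rw [this]
      simp
    have h0 : q (a * σ a - 1) = 0 := by
      apply φ.injective
      rw [map_zero]
      exact key
    exact Ideal.Quotient.eq_zero_iff_mem.mp h0
  · intro h
    have habs : ∀ ψ : A →+* ℂ, ‖ψ a‖ = 1 := by
      intro ψ
      have hnorm : ψ a * starRingEnd ℂ (ψ a) = 1 := by
        rw [← hσ ψ a, ← map_mul, h, map_one]
      rw [Complex.mul_conj] at hnorm
      have h2 : Complex.normSq (ψ a) = 1 := by exact_mod_cast hnorm
      have h3 : ‖ψ a‖ ^ 2 = 1 := by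
        rw [Complex.sq_norm]; exact h2
      nlinarith [norm_nonneg (ψ a)]
    have hch : ∀ M : Ideal (ℚ ⊗[ℤ] A), ∃ n : ℕ, 0 < n ∧
        (M.IsMaximal → (Algebra.TensorProduct.includeRight a : ℚ ⊗[ℤ] A) ^ n - 1 ∈ M) := by
      intro M
      by_cases hM : M.IsMaximal
      · obtain ⟨n, hn, hmem⟩ := cm_aux_root A a habs M hM
        exact ⟨n, hn, fun _ => hmem⟩
      · exact ⟨1, one_pos, fun hM' => absurd hM' hM⟩
    choose n hn hmem using hch
    set S : Finset (Ideal (ℚ ⊗[ℤ] A)) :=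
      (IsArtinianRing.setOfPred_isMaximal_finite (ℚ ⊗[ℤ] A)).toFinset with hS
    set N : ℕ := ∏ M ∈ S, n M with hN
    have hNpos : 0 < N := Finset.prod_pos fun M _ => hn M
    refine ⟨N, hNpos, ?_⟩
    rw [← sub_eq_zero]
    apply cm_aux_vanish A
    intro M hM
    have hMS : M ∈ S := by
      rw [hS, Set.Finite.mem_toFinset]
      exact hM
    obtain ⟨c, hc⟩ : n M ∣ N := Finset.dvd_prod_of_mem n hMS
    rw [← Ideal.Quotient.eq_zero_iff_mem]
    simp only [map_sub, map_pow, map_one]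
    rw [sub_eq_zero]
    have hbase : (Ideal.Quotient.mk M) (Algebra.TensorProduct.includeRight a) ^ (n M) = 1 := by
      have := hmem M hM
      rw [← Ideal.Quotient.eq_zero_iff_mem, map_sub, map_pow, map_one, sub_eq_zero] at this
      exact this
    rw [hc, pow_mul, hbase]
    exact one_pow c
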